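/- Let μ be the Gibbs distribution of a permissive spin system (G,q,A_E,A_V) where G has maximum degree at most Δ. Let Λ ⊊ V, let σ,τ : Λ → [q] be partial configurations differing only at a vertex v ∈ Λ, and let n' = |V∖Λ| ≥ 1. Let P and Q be the single-site dynamics on the free vertices for μ^σ and μ^τ respectively: from a state X : V∖Λ → [q], pick u ∈ V∖Λ uniformly at random and resample X(u) from the conditional marginal μ^{σ ∪ X|_{V∖(Λ∪{u})}}_u (respectively with τ in place of σ). Then for every X : V∖Λ → [q], W(P(X),Q(X)) ≤ Δ/n', where W is the Wasserstein distance with respect to Hamming distance on configurations of V∖Λ. -/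

import Mathlib

open scoped Classical BigOperators

noncomputable section

namespace SpinFormal

variable {V : Type} [Fintype V] [DecidableEq V] {q : ℕ}

/-- `μ` is a probability distribution on the finite type `Ω`. -/
def IsDist {Ω : Type} [Fintype Ω] (μ : Ω → ℝ) : Prop :=
  (∀ x, 0 ≤ μ x) ∧ ∑ x, μ x = 1

/-- `π` is a coupling of `μ` and `ν`. -/
def IsCoupling {Ω₁ Ω₂ : Type} [Fintype Ω₁] [Fintype Ω₂]
    (π : Ω₁ × Ω₂ → ℝ) (μ : Ω₁ → ℝ) (ν : Ω₂ → ℝ) : Prop :=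
  (∀ p, 0 ≤ π p) ∧ (∀ x, ∑ y, π (x, y) = μ x) ∧ (∀ y, ∑ x, π (x, y) = ν y)

/-- 1-Wasserstein distance with respect to a cost `d`. -/
def Wass {Ω₁ Ω₂ : Type} [Fintype Ω₁] [Fintype Ω₂] (d : Ω₁ → Ω₂ → ℝ)
    (μ : Ω₁ → ℝ) (ν : Ω₂ → ℝ) : ℝ :=
  sInf {c : ℝ | ∃ π : Ω₁ × Ω₂ → ℝ, IsCoupling π μ ν ∧ ∑ p : Ω₁ × Ω₂, π p * d p.1 p.2 = c}

/-- Hamming distance between two configurations, as a real number. -/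
def hamming {W : Type} [Fintype W] {α : Type} [DecidableEq α] (σ τ : W → α) : ℝ :=
  ((Finset.univ.filter fun w => σ w ≠ τ w).card : ℝ)

/-- Total variation distance between two functions on a finite type. -/
def tvDist {X : Type} [Fintype X] (μ ν : X → ℝ) : ℝ := (∑ x, |μ x - ν x|) / 2

/-- The symmetrised edge interaction, as a function on unordered pairs.
When `AE` is symmetric this is just `AE (τ u) (τ v)` on the edge `{u,v}`. -/
def edgeFactor (AE : Fin q → Fin q → ℝ) (τ : V → Fin q) : Sym2 V → ℝ :=
  Sym2.lift ⟨fun u v => (AE (τ u) (τ v) + AE (τ v) (τ u)) / 2, fun u v => by simp [add_comm]⟩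

/-- The conditional weight `w^σ(τ)` for the pinning `σ` on `Λ`: products range over
vertices outside `Λ` and edges with at least one endpoint outside `Λ`. -/
def condWeight (G : SimpleGraph V) (AE : Fin q → Fin q → ℝ) (AV : Fin q → ℝ)
    (Λ : Finset V) (σ τ : V → Fin q) : ℝ :=
  (if ∀ v ∈ Λ, τ v = σ v then (1 : ℝ) else 0)
    * (∏ v ∈ Λᶜ, AV (τ v))
    * ∏ e ∈ Finset.univ.filter
        (fun e : Sym2 V => e ∈ G.edgeSet ∧ ¬ ∀ v ∈ e, v ∈ Λ), edgeFactor AE τ e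

/-- The conditional partition function `Z^σ`. -/
def condZ (G : SimpleGraph V) (AE : Fin q → Fin q → ℝ) (AV : Fin q → ℝ)
    (Λ : Finset V) (σ : V → Fin q) : ℝ :=
  ∑ τ : V → Fin q, condWeight G AE AV Λ σ τ

/-- The conditional Gibbs distribution `μ^σ`. -/
def condDist (G : SimpleGraph V) (AE : Fin q → Fin q → ℝ) (AV : Fin q → ℝ)
    (Λ : Finset V) (σ : V → Fin q) : (V → Fin q) → ℝ :=
  fun τ => condWeight G AE AV Λ σ τ / condZ G AE AV Λ σ

/-- A spin system is permissive if every conditional partition function is positive. -/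
def Permissive (G : SimpleGraph V) (AE : Fin q → Fin q → ℝ) (AV : Fin q → ℝ) : Prop :=
  ∀ (Λ : Finset V) (σ : V → Fin q), 0 < condZ G AE AV Λ σ

/-- Marginal of a distribution on configurations at a single vertex. -/
def marginalAt (μ : (V → Fin q) → ℝ) (u : V) (c : Fin q) : ℝ :=
  ∑ τ : V → Fin q, if τ u = c then μ τ else 0

/-- Marginal probability of a partial configuration `σ` on `Λ`. -/
def margOn (μ : (V → Fin q) → ℝ) (Λ : Finset V) (σ : V → Fin q) : ℝ :=
  ∑ τ : V → Fin q, if ∀ v ∈ Λ, τ v = σ v then μ τ else 0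

/-- Two partial configurations on `Λ` differ exactly at the vertex `v ∈ Λ`. -/
def DifferOnlyAt (Λ : Finset V) (σ τ : V → Fin q) (v : V) : Prop :=
  v ∈ Λ ∧ σ v ≠ τ v ∧ ∀ u ∈ Λ, u ≠ v → σ u = τ u

/-- `C`-coupling independence of the Gibbs distribution of a spin system. -/
def CouplingIndependence (G : SimpleGraph V) (AE : Fin q → Fin q → ℝ)
    (AV : Fin q → ℝ) (C : ℝ) : Prop :=
  ∀ (Λ : Finset V) (σ τ : V → Fin q) (v : V), DifferOnlyAt Λ σ τ v →
    Wass hamming (condDist G AE AV Λ σ) (condDist G AE AV Λ τ) ≤ C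

/-- The sphere of radius `ℓ` around `v` in `G` (w.r.t. graph distance). -/
def sphere (G : SimpleGraph V) (v : V) (ℓ : ℕ) : Finset V :=
  Finset.univ.filter fun u => G.Reachable v u ∧ G.dist v u = ℓ

end SpinFormal

namespace SpinFormal

variable {V : Type} [Fintype V] [DecidableEq V] {q : ℕ}

/-- The configuration equal to `σ` on `Λ` and to `X` off `Λ`. -/
def overlay (Λ : Finset V) (σ X : V → Fin q) : V → Fin q :=
  fun w => if w ∈ Λ then σ w else X w

/-- One step of the single-site (Glauber) dynamics on the free vertices `V∖Λ` for the
conditional distribution `μ^σ`, started from `X`: pick `u ∈ V∖Λ` uniformly at random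
and resample the value at `u` from the conditional marginal given `σ` on `Λ` and `X`
on the remaining free vertices. -/
noncomputable def singleSiteStep (G : SimpleGraph V) (AE : Fin q → Fin q → ℝ)
    (AV : Fin q → ℝ) (Λ : Finset V) (σ : V → Fin q) (X : V → Fin q) :
    (V → Fin q) → ℝ := fun Y =>
  (1 / ((Λᶜ : Finset V).card : ℝ)) * ∑ u ∈ (Λᶜ : Finset V),
    (if ∀ w : V, w ≠ u → Y w = X w then
      marginalAt (condDist G AE AV ({u} : Finset V)ᶜ (overlay Λ σ X)) u (Y u)
    else 0)

end SpinFormal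


namespace SpinFormal

variable {V : Type} [Fintype V] [DecidableEq V] {q : ℕ}

lemma sum_agree (X : V → Fin q) (u : V) (g : Fin q → ℝ) :
    (∑ Y : V → Fin q, if ∀ w : V, w ≠ u → Y w = X w then g (Y u) else 0) = ∑ c, g c := by
  rw [← Finset.sum_filter]
  refine Finset.sum_nbij' (i := fun Y => Y u) (j := fun c => Function.update X u c)
    ?_ ?_ ?_ ?_ ?_
  · intro Y _; exact Finset.mem_univ _
  · intro c _
    simp only [Finset.mem_filter, Finset.mem_univ, true_and]
    intro w hw; rw [Function.update_of_ne hw]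
  · intro Y hY
    simp only [Finset.mem_filter, Finset.mem_univ, true_and] at hY
    show Function.update X u (Y u) = Y
    funext w
    by_cases hw : w = u
    · subst hw; rw [Function.update_self]
    · rw [Function.update_of_ne hw]; exact (hY w hw).symm
  · intro c _; show Function.update X u c u = c; exact Function.update_self u c X
  · intro Y _; rfl

lemma edgeFactor_nonneg {AE : Fin q → Fin q → ℝ} (hAEnn : ∀ i j, 0 ≤ AE i j)
    (ρ : V → Fin q) (e : Sym2 V) : 0 ≤ edgeFactor AE ρ e := by
  induction e using Sym2.ind with
  | _ a b =>
    simp only [edgeFactor, Sym2.lift_mk]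
    exact div_nonneg (add_nonneg (hAEnn _ _) (hAEnn _ _)) (by norm_num)

lemma condWeight_nonneg {G : SimpleGraph V} {AE : Fin q → Fin q → ℝ} {AV : Fin q → ℝ}
    (hAEnn : ∀ i j, 0 ≤ AE i j) (hAVnn : ∀ i, 0 ≤ AV i)
    (Λ : Finset V) (η ρ : V → Fin q) : 0 ≤ condWeight G AE AV Λ η ρ := by
  unfold condWeight
  refine mul_nonneg (mul_nonneg ?_ ?_) ?_
  · split <;> norm_num
  · exact Finset.prod_nonneg fun _ _ => hAVnn _
  · exact Finset.prod_nonneg fun e _ => edgeFactor_nonneg hAEnn ρ e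

lemma condWeight_single_eq_zero {G : SimpleGraph V} {AE : Fin q → Fin q → ℝ}
    {AV : Fin q → ℝ} (η ρ : V → Fin q) (u : V)
    (h : ρ ≠ Function.update η u (ρ u)) :
    condWeight G AE AV (({u} : Finset V)ᶜ) η ρ = 0 := by
  unfold condWeight
  rw [if_neg, zero_mul, zero_mul]
  intro hall
  apply h; funext w
  by_cases hw : w = u
  · subst hw; rw [Function.update_self]
  · rw [Function.update_of_ne hw]
    exact hall w (by simpa using hw)

lemma marginalAt_single {G : SimpleGraph V} {AE : Fin q → Fin q → ℝ} {AV : Fin q → ℝ}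
    (η : V → Fin q) (u : V) (c : Fin q) :
    marginalAt (condDist G AE AV (({u} : Finset V)ᶜ) η) u c
      = condWeight G AE AV (({u} : Finset V)ᶜ) η (Function.update η u c)
        / condZ G AE AV (({u} : Finset V)ᶜ) η := by
  unfold marginalAt condDist
  have h1 : ∀ ρ : V → Fin q,
      (if ρ u = c then condWeight G AE AV (({u} : Finset V)ᶜ) η ρ
          / condZ G AE AV (({u} : Finset V)ᶜ) η else 0)
      = (if ρ u = c then condWeight G AE AV (({u} : Finset V)ᶜ) η ρ else 0)
          / condZ G AE AV (({u} : Finset V)ᶜ) η := by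
    intro ρ; split <;> simp
  rw [Finset.sum_congr rfl (fun ρ _ => h1 ρ), ← Finset.sum_div]
  congr 1
  rw [Finset.sum_eq_single (Function.update η u c)]
  · rw [if_pos (Function.update_self u c η)]
  · intro ρ _ hρ
    by_cases h : ρ u = c
    · rw [if_pos h]
      apply condWeight_single_eq_zero
      rw [h]; exact hρ
    · rw [if_neg h]
  · intro h; exact absurd (Finset.mem_univ _) h

lemma condZ_single {G : SimpleGraph V} {AE : Fin q → Fin q → ℝ} {AV : Fin q → ℝ}
    (η : V → Fin q) (u : V) :
    condZ G AE AV (({u} : Finset V)ᶜ) η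
      = ∑ c, condWeight G AE AV (({u} : Finset V)ᶜ) η (Function.update η u c) := by
  unfold condZ
  rw [← sum_agree η u
    (fun c => condWeight G AE AV (({u} : Finset V)ᶜ) η (Function.update η u c))]
  apply Finset.sum_congr rfl
  intro ρ _
  by_cases h : ∀ w : V, w ≠ u → ρ w = η w
  · rw [if_pos h]
    congr 1
    funext w
    by_cases hw : w = u
    · subst hw; rw [Function.update_self]
    · rw [Function.update_of_ne hw]; exact h w hw
  · rw [if_neg h]
    push_neg at h
    obtain ⟨w, hw, hne⟩ := h
    apply condWeight_single_eq_zero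
    intro heq
    exact hne (by rw [heq, Function.update_of_ne hw])

lemma marginalAt_single_dist {G : SimpleGraph V} {AE : Fin q → Fin q → ℝ}
    {AV : Fin q → ℝ} (hAEnn : ∀ i j, 0 ≤ AE i j) (hAVnn : ∀ i, 0 ≤ AV i)
    (hperm : Permissive G AE AV) (η : V → Fin q) (u : V) :
    IsDist (marginalAt (condDist G AE AV (({u} : Finset V)ᶜ) η) u) := by
  have hZ := hperm (({u} : Finset V)ᶜ) η
  constructor
  · intro c
    rw [marginalAt_single]
    exact div_nonneg (condWeight_nonneg hAEnn hAVnn _ _ _) hZ.le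
  · calc ∑ c, marginalAt (condDist G AE AV (({u} : Finset V)ᶜ) η) u c
        = ∑ c, condWeight G AE AV (({u} : Finset V)ᶜ) η (Function.update η u c)
            / condZ G AE AV (({u} : Finset V)ᶜ) η :=
          Finset.sum_congr rfl fun c _ => marginalAt_single η u c
      _ = 1 := by rw [← Finset.sum_div, ← condZ_single, div_self hZ.ne']

lemma edgeFactor_congr {AE : Fin q → Fin q → ℝ} {ρ ρ' : V → Fin q} (e : Sym2 V)
    (h : ∀ w ∈ e, ρ w = ρ' w) : edgeFactor AE ρ e = edgeFactor AE ρ' e := by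
  induction e using Sym2.ind with
  | _ a b =>
    have ha := h a (Sym2.mem_mk_left a b)
    have hb := h b (Sym2.mem_mk_right a b)
    simp only [edgeFactor, Sym2.lift_mk, ha, hb]

lemma mem_adj_of_edge {G : SimpleGraph V} {e : Sym2 V} (he : e ∈ G.edgeSet) {u : V}
    (hu : u ∈ e) : ∀ w ∈ e, w = u ∨ G.Adj u w := by
  induction e using Sym2.ind with
  | _ a b =>
    intro w hw
    rw [Sym2.mem_iff] at hu hw
    rw [SimpleGraph.mem_edgeSet] at he
    rcases hu with rfl | rfl <;> rcases hw with rfl | rfl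
    · exact Or.inl rfl
    · exact Or.inr he
    · exact Or.inr he.symm
    · exact Or.inl rfl

lemma marginal_eq_of_not_adj {G : SimpleGraph V} {AE : Fin q → Fin q → ℝ}
    {AV : Fin q → ℝ} (η : V → Fin q) (u v : V) (b : Fin q)
    (huv : u ≠ v) (hadj : ¬ G.Adj u v) :
    marginalAt (condDist G AE AV (({u} : Finset V)ᶜ) (Function.update η v b)) u
      = marginalAt (condDist G AE AV (({u} : Finset V)ᶜ) η) u := by
  have key : ∀ c : Fin q,
      condWeight G AE AV (({u} : Finset V)ᶜ) (Function.update η v b)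
        (Function.update (Function.update η v b) u c)
      = condWeight G AE AV (({u} : Finset V)ᶜ) η (Function.update η u c) := by
    intro c
    have hupd : ∀ w : V, w = u ∨ G.Adj u w →
        Function.update (Function.update η v b) u c w = Function.update η u c w := by
      intro w hw
      rcases hw with rfl | hw
      · rw [Function.update_self, Function.update_self]
      · have hwu : w ≠ u := fun h => G.irrefl (h ▸ hw)
        have hwv : w ≠ v := fun h => hadj (h ▸ hw)
        rw [Function.update_of_ne hwu, Function.update_of_ne hwu,
          Function.update_of_ne hwv]
    unfold condWeight
    have hi1 : ∀ w ∈ (({u} : Finset V)ᶜ),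
        Function.update (Function.update η v b) u c w = Function.update η v b w :=
      fun w hw => Function.update_of_ne (by simpa using hw) _ _
    have hi2 : ∀ w ∈ (({u} : Finset V)ᶜ),
        Function.update η u c w = η w :=
      fun w hw => Function.update_of_ne (by simpa using hw) _ _
    rw [if_pos hi1, if_pos hi2]
    congr 1
    · congr 1
      apply Finset.prod_congr rfl
      intro w hw
      have hwu : w = u := by simpa using hw
      subst hwu
      rw [hupd _ (Or.inl rfl)]
    · apply Finset.prod_congr rfl
      intro e he
      simp only [Finset.mem_filter, Finset.mem_univ, true_and] at he
      obtain ⟨hmem, hnot⟩ := he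
      push_neg at hnot
      obtain ⟨w₀, hw₀, hw₀u⟩ := hnot
      have hw0 : w₀ = u := by simpa using hw₀u
      subst hw0
      exact edgeFactor_congr e fun w hw =>
        hupd w (mem_adj_of_edge hmem hw₀ w hw)
  funext c
  rw [marginalAt_single, marginalAt_single, condZ_single, condZ_single, key c]
  congr 1
  exact Finset.sum_congr rfl fun c' _ => key c'

lemma hamming_single (Y Y' : V → Fin q) (u : V) (h : ∀ w : V, w ≠ u → Y w = Y' w) :
    hamming Y Y' = if Y u = Y' u then 0 else 1 := by
  unfold hamming
  split_ifs with h'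
  · have he : (Finset.univ.filter fun w => Y w ≠ Y' w) = ∅ := by
      ext w
      simp only [Finset.mem_filter, Finset.mem_univ, true_and, Finset.notMem_empty,
        iff_false, not_not]
      by_cases hw : w = u
      · subst hw; exact h'
      · exact h w hw
    rw [he]; simp
  · have he : (Finset.univ.filter fun w => Y w ≠ Y' w) = {u} := by
      ext w
      simp only [Finset.mem_filter, Finset.mem_univ, true_and, Finset.mem_singleton]
      constructor
      · intro hne
        by_contra hw
        exact hne (h w hw)
      · intro hw; subst hw; exact h'
    rw [he]; simp

/-- The canonical coupling of two distributions on `Fin q`: diagonal if equal,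
product otherwise. -/
def kap {q : ℕ} (μ ν : Fin q → ℝ) : Fin q → Fin q → ℝ :=
  fun c c' => if μ = ν then (if c = c' then μ c else 0) else μ c * ν c'

lemma kap_nonneg {q : ℕ} {μ ν : Fin q → ℝ} (hμ : ∀ c, 0 ≤ μ c) (hν : ∀ c, 0 ≤ ν c)
    (c c' : Fin q) : 0 ≤ kap μ ν c c' := by
  unfold kap
  split
  · split
    · exact hμ c
    · exact le_refl 0
  · exact mul_nonneg (hμ c) (hν c')

lemma kap_sum_right {q : ℕ} {μ ν : Fin q → ℝ} (hν : IsDist ν) (c : Fin q) :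
    ∑ c', kap μ ν c c' = μ c := by
  unfold kap
  split
  · simp
  · rw [← Finset.mul_sum, hν.2, mul_one]

lemma kap_sum_left {q : ℕ} {μ ν : Fin q → ℝ} (hμ : IsDist μ) (c' : Fin q) :
    ∑ c, kap μ ν c c' = ν c' := by
  unfold kap
  split
  · rename_i h
    subst h
    rw [Finset.sum_ite_eq' Finset.univ c' μ]
    simp
  · rw [← Finset.sum_mul, hμ.2, one_mul]

lemma kap_cost {q : ℕ} {μ ν : Fin q → ℝ} (hμ : IsDist μ) (hν : IsDist ν) :
    ∑ c, ∑ c', kap μ ν c c' * (if c = c' then 0 else 1)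
      ≤ if μ = ν then 0 else 1 := by
  by_cases h : μ = ν
  · rw [if_pos h]
    apply le_of_eq
    apply Finset.sum_eq_zero
    intro c _
    apply Finset.sum_eq_zero
    intro c' _
    unfold kap
    rw [if_pos h]
    by_cases hc : c = c'
    · rw [if_pos hc, if_pos hc, mul_zero]
    · rw [if_neg hc, if_neg hc, zero_mul]
  · rw [if_neg h]
    calc ∑ c, ∑ c', kap μ ν c c' * (if c = c' then 0 else 1)
        ≤ ∑ c, ∑ c', kap μ ν c c' := by
          apply Finset.sum_le_sum
          intro c _
          apply Finset.sum_le_sum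
          intro c' _
          have hk := kap_nonneg hμ.1 hν.1 c c'
          split
          · simpa using hk
          · simp
      _ = 1 := by
          rw [Finset.sum_congr rfl fun c _ => kap_sum_right hν c, hμ.2]

set_option maxHeartbeats 2000000 in
lemma glauber_coupling_bound (S : Finset V) (hS : S.Nonempty) (X : V → Fin q)
    (M M' : V → Fin q → ℝ) (hM : ∀ u ∈ S, IsDist (M u)) (hM' : ∀ u ∈ S, IsDist (M' u)) :
    Wass hamming
      (fun Y : V → Fin q => (1 / (S.card : ℝ)) * ∑ u ∈ S,
        (if ∀ w : V, w ≠ u → Y w = X w then M u (Y u) else 0))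
      (fun Y : V → Fin q => (1 / (S.card : ℝ)) * ∑ u ∈ S,
        (if ∀ w : V, w ≠ u → Y w = X w then M' u (Y u) else 0))
      ≤ (∑ u ∈ S, if M u = M' u then (0:ℝ) else 1) / (S.card : ℝ) := by
  have hn : (0:ℝ) < (S.card : ℝ) := by exact_mod_cast Finset.card_pos.mpr hS
  set π : ((V → Fin q) × (V → Fin q)) → ℝ := fun p =>
    (1 / (S.card : ℝ)) * ∑ u ∈ S,
      (if (∀ w : V, w ≠ u → p.1 w = X w) ∧ (∀ w : V, w ≠ u → p.2 w = X w) then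
        kap (M u) (M' u) (p.1 u) (p.2 u) else 0) with hπdef
  have hπnn : ∀ p, 0 ≤ π p := by
    intro p
    apply mul_nonneg (by positivity)
    apply Finset.sum_nonneg
    intro u hu
    split
    · exact kap_nonneg (hM u hu).1 (hM' u hu).1 _ _
    · exact le_refl 0
  have hmarg1 : ∀ Y, ∑ Y', π (Y, Y') = (1 / (S.card : ℝ)) * ∑ u ∈ S,
      (if ∀ w : V, w ≠ u → Y w = X w then M u (Y u) else 0) := by
    intro Y
    simp only [hπdef]
    rw [← Finset.mul_sum, Finset.sum_comm]
    congr 1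
    apply Finset.sum_congr rfl
    intro u hu
    by_cases hA : ∀ w : V, w ≠ u → Y w = X w
    · rw [if_pos hA]
      calc (∑ Y' : V → Fin q, if (∀ w : V, w ≠ u → Y w = X w) ∧ (∀ w : V, w ≠ u → Y' w = X w)
            then kap (M u) (M' u) (Y u) (Y' u) else 0)
          = ∑ Y' : V → Fin q, (if (∀ w : V, w ≠ u → Y' w = X w)
              then kap (M u) (M' u) (Y u) (Y' u) else 0) := by
            apply Finset.sum_congr rfl
            intro Y' _
            by_cases hB : ∀ w : V, w ≠ u → Y' w = X w
            · rw [if_pos ⟨hA, hB⟩, if_pos hB]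
            · rw [if_neg (fun h => hB h.2), if_neg hB]
        _ = ∑ c', kap (M u) (M' u) (Y u) c' :=
            sum_agree X u (fun c' => kap (M u) (M' u) (Y u) c')
        _ = M u (Y u) := kap_sum_right (hM' u hu) _
    · rw [if_neg hA]
      apply Finset.sum_eq_zero
      intro Y' _
      exact if_neg (fun h => hA h.1)
  have hmarg2 : ∀ Y', ∑ Y, π (Y, Y') = (1 / (S.card : ℝ)) * ∑ u ∈ S,
      (if ∀ w : V, w ≠ u → Y' w = X w then M' u (Y' u) else 0) := by
    intro Y'
    simp only [hπdef]
    rw [← Finset.mul_sum, Finset.sum_comm]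
    congr 1
    apply Finset.sum_congr rfl
    intro u hu
    by_cases hB : ∀ w : V, w ≠ u → Y' w = X w
    · rw [if_pos hB]
      calc (∑ Y : V → Fin q, if (∀ w : V, w ≠ u → Y w = X w) ∧ (∀ w : V, w ≠ u → Y' w = X w)
            then kap (M u) (M' u) (Y u) (Y' u) else 0)
          = ∑ Y : V → Fin q, (if (∀ w : V, w ≠ u → Y w = X w)
              then kap (M u) (M' u) (Y u) (Y' u) else 0) := by
            apply Finset.sum_congr rfl
            intro Y _
            by_cases hA : ∀ w : V, w ≠ u → Y w = X w
            · rw [if_pos ⟨hA, hB⟩, if_pos hA]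
            · rw [if_neg (fun h => hA h.1), if_neg hA]
        _ = ∑ c, kap (M u) (M' u) c (Y' u) :=
            sum_agree X u (fun c => kap (M u) (M' u) c (Y' u))
        _ = M' u (Y' u) := kap_sum_left (hM u hu) _
    · rw [if_neg hB]
      apply Finset.sum_eq_zero
      intro Y _
      exact if_neg (fun h => hB h.2)
  have key : ∀ u ∈ S, (∑ Y : V → Fin q, ∑ Y' : V → Fin q,
      (if (∀ w : V, w ≠ u → Y w = X w) ∧ (∀ w : V, w ≠ u → Y' w = X w) then
        kap (M u) (M' u) (Y u) (Y' u) else 0) * hamming Y Y')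
      ≤ (if M u = M' u then (0:ℝ) else 1) := by
    intro u hu
    calc (∑ Y : V → Fin q, ∑ Y' : V → Fin q,
        (if (∀ w : V, w ≠ u → Y w = X w) ∧ (∀ w : V, w ≠ u → Y' w = X w) then
          kap (M u) (M' u) (Y u) (Y' u) else 0) * hamming Y Y')
        = ∑ Y : V → Fin q, (if ∀ w : V, w ≠ u → Y w = X w then
            (∑ c', kap (M u) (M' u) (Y u) c' * (if Y u = c' then (0:ℝ) else 1)) else 0) := by
          apply Finset.sum_congr rfl
          intro Y _
          by_cases hA : ∀ w : V, w ≠ u → Y w = X w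
          · rw [if_pos hA,
              ← sum_agree X u (fun c' => kap (M u) (M' u) (Y u) c' * (if Y u = c' then (0:ℝ) else 1))]
            apply Finset.sum_congr rfl
            intro Y' _
            by_cases hB : ∀ w : V, w ≠ u → Y' w = X w
            · rw [if_pos ⟨hA, hB⟩, if_pos hB]
              show kap (M u) (M' u) (Y u) (Y' u) * hamming Y Y'
                = kap (M u) (M' u) (Y u) (Y' u) * (if Y u = Y' u then (0:ℝ) else 1)
              congr 1
              exact hamming_single Y Y' u fun w hw => (hA w hw).trans (hB w hw).symm
            · rw [if_neg (fun h => hB h.2), if_neg hB, zero_mul]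
          · rw [if_neg hA]
            apply Finset.sum_eq_zero
            intro Y' _
            rw [if_neg (fun h : _ ∧ _ => hA h.1), zero_mul]
      _ = ∑ c, ∑ c', kap (M u) (M' u) c c' * (if c = c' then (0:ℝ) else 1) :=
          sum_agree X u (fun c => ∑ c', kap (M u) (M' u) c c' * (if c = c' then (0:ℝ) else 1))
      _ ≤ _ := kap_cost (hM u hu) (hM' u hu)
  have hcost : (∑ p : (V → Fin q) × (V → Fin q), π p * hamming p.1 p.2)
      ≤ (∑ u ∈ S, if M u = M' u then (0:ℝ) else 1) / (S.card : ℝ) := by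
    calc (∑ p : (V → Fin q) × (V → Fin q), π p * hamming p.1 p.2)
        = (1 / (S.card : ℝ)) * ∑ u ∈ S, ∑ p : (V → Fin q) × (V → Fin q),
            (if (∀ w : V, w ≠ u → p.1 w = X w) ∧ (∀ w : V, w ≠ u → p.2 w = X w) then
              kap (M u) (M' u) (p.1 u) (p.2 u) else 0) * hamming p.1 p.2 := by
          simp only [hπdef, mul_assoc, Finset.sum_mul]
          rw [← Finset.mul_sum, Finset.sum_comm]
      _ = (1 / (S.card : ℝ)) * ∑ u ∈ S, ∑ Y : V → Fin q, ∑ Y' : V → Fin q,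
            (if (∀ w : V, w ≠ u → Y w = X w) ∧ (∀ w : V, w ≠ u → Y' w = X w) then
              kap (M u) (M' u) (Y u) (Y' u) else 0) * hamming Y Y' := by
          congr 1
          apply Finset.sum_congr rfl
          intro u _
          exact Fintype.sum_prod_type _
      _ ≤ (1 / (S.card : ℝ)) * ∑ u ∈ S, (if M u = M' u then (0:ℝ) else 1) := by
          apply mul_le_mul_of_nonneg_left _ (by positivity)
          exact Finset.sum_le_sum key
      _ = (∑ u ∈ S, if M u = M' u then (0:ℝ) else 1) / (S.card : ℝ) := by
          rw [one_div, inv_mul_eq_div]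
  refine le_trans (csInf_le ?_ ?_) hcost
  · refine ⟨0, ?_⟩
    rintro c ⟨π', hπ', rfl⟩
    apply Finset.sum_nonneg
    intro p _
    exact mul_nonneg (hπ'.1 p) (Nat.cast_nonneg _)
  · exact ⟨π, ⟨hπnn, hmarg1, hmarg2⟩, rfl⟩


end SpinFormal

open SpinFormal

set_option maxHeartbeats 2000000 in
/-- the single-site dynamics for `μ^σ` and `μ^τ`, where the pinnings
differ only at `v ∈ Λ`, started from the same state, can be coupled with expected
Hamming disagreement at most `Δ/n'`. -/
theorem single_site_one_step_disagreement
    {V : Type} [Fintype V] [DecidableEq V] {q : ℕ}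
    (Δ : ℕ) (G : SimpleGraph V) [DecidableRel G.Adj]
    (AE : Fin q → Fin q → ℝ) (AV : Fin q → ℝ)
    (hq : 2 ≤ q)
    (hAEsymm : ∀ i j, AE i j = AE j i)
    (hAEnn : ∀ i j, 0 ≤ AE i j) (hAVnn : ∀ i, 0 ≤ AV i)
    (hperm : Permissive G AE AV)
    (hdeg : ∀ u : V, G.degree u ≤ Δ)
    (Λ : Finset V) (hΛ : Λ ≠ Finset.univ)
    (σ τ : V → Fin q) (v : V) (hdiff : DifferOnlyAt Λ σ τ v) :
    ∀ X : V → Fin q,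
      Wass hamming (singleSiteStep G AE AV Λ σ X) (singleSiteStep G AE AV Λ τ X)
        ≤ (Δ : ℝ) / (((Λᶜ : Finset V).card : ℝ)) := by
  intro X
  obtain ⟨hvΛ, hσv, hagree⟩ := hdiff
  have hne : (Λᶜ : Finset V).Nonempty := by
    rw [Finset.nonempty_iff_ne_empty]
    intro h
    apply hΛ
    rw [← compl_compl Λ, h, Finset.compl_empty]
  have hnpos : (0:ℝ) < ((Λᶜ : Finset V).card : ℝ) := by
    exact_mod_cast Finset.card_pos.mpr hne
  have hov : overlay Λ τ X = Function.update (overlay Λ σ X) v (τ v) := by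
    funext w
    by_cases hw : w = v
    · subst hw
      rw [Function.update_self]
      simp [overlay, hvΛ]
    · rw [Function.update_of_ne hw]
      by_cases hwΛ : w ∈ Λ
      · simp only [overlay, if_pos hwΛ]
        exact (hagree w hwΛ hw).symm
      · simp only [overlay, if_neg hwΛ]
  have hmeq : ∀ u ∈ (Λᶜ : Finset V), ¬ G.Adj u v →
      marginalAt (condDist G AE AV (({u} : Finset V)ᶜ) (overlay Λ τ X)) u
        = marginalAt (condDist G AE AV (({u} : Finset V)ᶜ) (overlay Λ σ X)) u := by
    intro u hu hadj
    have huv : u ≠ v := fun h => (Finset.mem_compl.mp hu) (h ▸ hvΛ)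
    rw [hov]
    exact marginal_eq_of_not_adj _ u v (τ v) huv hadj
  have hb := glauber_coupling_bound (Λᶜ) hne X
      (fun u => marginalAt (condDist G AE AV (({u} : Finset V)ᶜ) (overlay Λ σ X)) u)
      (fun u => marginalAt (condDist G AE AV (({u} : Finset V)ᶜ) (overlay Λ τ X)) u)
      (fun u _ => marginalAt_single_dist hAEnn hAVnn hperm _ u)
      (fun u _ => marginalAt_single_dist hAEnn hAVnn hperm _ u)
  refine le_trans hb ?_
  rw [div_le_div_iff₀ hnpos hnpos]
  have hnum : (∑ u ∈ (Λᶜ : Finset V),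
      if marginalAt (condDist G AE AV (({u} : Finset V)ᶜ) (overlay Λ σ X)) u
        = marginalAt (condDist G AE AV (({u} : Finset V)ᶜ) (overlay Λ τ X)) u
      then (0:ℝ) else 1) ≤ (Δ : ℝ) := by
    calc (∑ u ∈ (Λᶜ : Finset V),
        if marginalAt (condDist G AE AV (({u} : Finset V)ᶜ) (overlay Λ σ X)) u
          = marginalAt (condDist G AE AV (({u} : Finset V)ᶜ) (overlay Λ τ X)) u
        then (0:ℝ) else 1)
        ≤ ∑ u ∈ (Λᶜ : Finset V), (if G.Adj u v then (1:ℝ) else 0) := by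
          apply Finset.sum_le_sum
          intro u hu
          by_cases hadj : G.Adj u v
          · rw [if_pos hadj]
            split <;> norm_num
          · rw [if_neg hadj, if_pos ((hmeq u hu hadj).symm)]
      _ ≤ ∑ u : V, (if G.Adj u v then (1:ℝ) else 0) := by
          apply Finset.sum_le_sum_of_subset_of_nonneg (Finset.subset_univ _)
          intro u _ _
          split <;> norm_num
      _ = ((Finset.univ.filter fun u => G.Adj u v).card : ℝ) := by
          rw [Finset.sum_boole]
      _ = (G.degree v : ℝ) := by
          have hfe : (Finset.univ.filter fun u => G.Adj u v) = G.neighborFinset v := by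
            ext u
            rw [SimpleGraph.mem_neighborFinset]
            simp only [Finset.mem_filter, Finset.mem_univ, true_and]
            exact G.adj_comm u v
          rw [hfe]
          rfl
      _ ≤ (Δ : ℝ) := by exact_mod_cast hdeg v
  calc (∑ u ∈ (Λᶜ : Finset V),
      if marginalAt (condDist G AE AV (({u} : Finset V)ᶜ) (overlay Λ σ X)) u
        = marginalAt (condDist G AE AV (({u} : Finset V)ᶜ) (overlay Λ τ X)) u
      then (0:ℝ) else 1) * ((Λᶜ : Finset V).card : ℝ)
      ≤ (Δ : ℝ) * ((Λᶜ : Finset V).card : ℝ) :=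
        mul_le_mul_of_nonneg_right hnum hnpos.le
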